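/- Let π ∈ P(E), μ* ∈ P(E) with μ* ≪ π, let h* = Ent(μ* | π) < ∞ and h ≥ h*. Let A ⊂ E be measurable with μ*(A) = e^{h* − h} > 0, and suppose moreover that conditional on T the measure behaves uniformly: π(A | T = t) = e^{h*−h} for T♯π-a.e. t and μ*(·|T=t) = π(·|T=t). Define η(dx) = e^{h−h*} 1_A(x) μ*(dx). Then η is a probability measure, T♯η = T♯μ*, and Ent(η | π) = h. -/

import Mathlib

open MeasureTheory ProbabilityTheory

/-- Relative entropy `Ent(η | μ) = ∫ ln (dη/dμ) dη`. -/
noncomputable def Ent {E : Type*} [MeasurableSpace E] (η μ : Measure E) : ℝ :=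
  ∫ x, Real.log ((η.rnDeriv μ) x).toReal ∂η

lemma compProd_condDistrib_eq {α β Ω : Type*} [MeasurableSpace α] [MeasurableSpace β]
    [MeasurableSpace Ω] [StandardBorelSpace Ω] [Nonempty Ω]
    {X : α → β} {Y : α → Ω} (hX : Measurable X) (hY : Measurable Y)
    (μ : Measure α) [IsFiniteMeasure μ] :
    μ.map X ⊗ₘ condDistrib Y X μ = μ.map (fun a => (X a, Y a)) := by
  rw [condDistrib, ← Measure.fst_map_prodMk (X := X) hY]
  exact (μ.map (fun a => (X a, Y a))).disintegrate _

lemma measure_inter_preimage {E F : Type*} [MeasurableSpace E] [StandardBorelSpace E]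
    [Nonempty E] [MeasurableSpace F] {T : E → F} (hT : Measurable T)
    (μ : Measure E) [IsFiniteMeasure μ] {B : Set F} {S : Set E}
    (hB : MeasurableSet B) (hS : MeasurableSet S) :
    μ (T ⁻¹' B ∩ S) = ∫⁻ t in B, condDistrib id T μ t S ∂(μ.map T) := by
  have hmap : μ.map (fun a => (T a, id a)) (B ×ˢ S) = μ (T ⁻¹' B ∩ S) := by
    rw [Measure.map_apply (hT.prodMk measurable_id) (hB.prod hS)]
    congr 1
  rw [← hmap, ← compProd_condDistrib_eq hT measurable_id, Measure.compProd_apply_prod hB hS]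

lemma density_factors {E F : Type*} [MeasurableSpace E] [StandardBorelSpace E]
    [Nonempty E] [MeasurableSpace F] {T : E → F} (hT : Measurable T)
    (π μs : Measure E) [IsProbabilityMeasure π] [IsProbabilityMeasure μs]
    (hac : μs ≪ π)
    (hcondEq : ∀ᵐ t ∂(π.map T), (condDistrib id T μs) t = (condDistrib id T π) t) :
    μs = π.withDensity (fun x => ((μs.map T).rnDeriv (π.map T)) (T x)) := by
  set g := (μs.map T).rnDeriv (π.map T) with hgdef
  have hg : Measurable g := Measure.measurable_rnDeriv _ _
  have hmapac : μs.map T ≪ π.map T := hac.map hT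
  ext S hS
  have lhs : μs S = ∫⁻ t, g t * condDistrib id T π t S ∂(π.map T) := by
    have h0 : μs S = μs (T ⁻¹' Set.univ ∩ S) := by simp
    rw [h0, measure_inter_preimage hT μs MeasurableSet.univ hS, Measure.restrict_univ,
      lintegral_congr_ae ((hcondEq.filter_mono hmapac.ae_le).mono fun t ht => by rw [ht]),
      ← Measure.withDensity_rnDeriv_eq _ _ hmapac,
      lintegral_withDensity_eq_lintegral_mul _ hg (Kernel.measurable_coe _ hS)]
    rfl
  have rhs : π.withDensity (fun x => g (T x)) S = ∫⁻ t, g t * condDistrib id T π t S ∂(π.map T) := by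
    rw [withDensity_apply _ hS]
    have h1 : ∫⁻ x in S, g (T x) ∂π
        = ∫⁻ p in Set.univ ×ˢ S, g p.1 ∂(π.map (fun a => (T a, id a))) := by
      rw [setLIntegral_map (MeasurableSet.univ.prod hS) (show Measurable fun p : F × E => g p.1 from hg.comp measurable_fst)
          (hT.prodMk measurable_id)]
      have hpre : (fun a : E => (T a, id a)) ⁻¹' (Set.univ ×ˢ S) = S := by
        ext x; simp
      rw [hpre]
    rw [h1, ← compProd_condDistrib_eq hT measurable_id π,
      Measure.setLIntegral_compProd (show Measurable fun p : F × E => g p.1 from hg.comp measurable_fst) MeasurableSet.univ hS,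
      Measure.restrict_univ]
    simp [setLIntegral_const]
  rw [lhs, rhs]

/-- Conditioning the entropy minimizer `μ*` to a set `A` of uniform conditional
`π`-probability `e^{h* - h}` yields a target `η = e^{h - h*} 1_A μ*` which is a probability
measure, has the same push-forward by `T`, and satisfies `Ent(η | π) = h`. -/
theorem conditioned_minimizer_entropy {E F : Type*}
    [MeasurableSpace E] [StandardBorelSpace E] [Nonempty E] [MeasurableSpace F]
    (T : E → F) (hT : Measurable T)
    (π μs : Measure E) [IsProbabilityMeasure π] [IsProbabilityMeasure μs]
    (hac : μs ≪ π)
    (hfin : Integrable (fun x => Real.log ((μs.rnDeriv π) x).toReal) μs)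
    (hstar h : ℝ) (hEnt : Ent μs π = hstar) (hh : hstar ≤ h)
    (A : Set E) (hAmeas : MeasurableSet A)
    (hAmass : μs A = ENNReal.ofReal (Real.exp (hstar - h)))
    (hcondA : ∀ᵐ t ∂(π.map T), (condDistrib id T π) t A = ENNReal.ofReal (Real.exp (hstar - h)))
    (hcondEq : ∀ᵐ t ∂(π.map T), (condDistrib id T μs) t = (condDistrib id T π) t) :
    ∀ η : Measure E, η = (ENNReal.ofReal (Real.exp (h - hstar))) • μs.restrict A →
      IsProbabilityMeasure η ∧ η.map T = μs.map T ∧ Ent η π = h := by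
  intro η hη
  set c := ENNReal.ofReal (Real.exp (h - hstar)) with hc
  set c' := ENNReal.ofReal (Real.exp (hstar - h)) with hc'
  have hcc' : c * c' = 1 := by
    rw [hc, hc', ← ENNReal.ofReal_mul (Real.exp_pos _).le, ← Real.exp_add]
    have : h - hstar + (hstar - h) = 0 := by ring
    rw [this, Real.exp_zero, ENNReal.ofReal_one]
  set g := (μs.map T).rnDeriv (π.map T) with hgdef
  have hg : Measurable g := Measure.measurable_rnDeriv _ _
  have hmapac : μs.map T ≪ π.map T := hac.map hT
  -- probability
  have hprob : IsProbabilityMeasure η := by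
    constructor
    rw [hη, Measure.smul_apply, Measure.restrict_apply MeasurableSet.univ, Set.univ_inter,
      hAmass, smul_eq_mul, hcc']
  -- pushforward equality
  have hcondA' : ∀ᵐ t ∂(μs.map T), condDistrib id T μs t A = c' := by
    filter_upwards [hcondEq.filter_mono hmapac.ae_le, hcondA.filter_mono hmapac.ae_le]
      with t h1 h2
    rw [h1]; exact h2
  have hmapEq : η.map T = μs.map T := by
    ext B hB
    rw [Measure.map_apply hT hB, hη, Measure.smul_apply, Measure.restrict_apply (hT hB),
      measure_inter_preimage hT μs hB hAmeas,
      lintegral_congr_ae (ae_restrict_of_ae hcondA'),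
      setLIntegral_const, smul_eq_mul, ← mul_assoc, hcc', one_mul,
      Measure.map_apply hT hB]
  refine ⟨hprob, hmapEq, ?_⟩
  -- entropy
  have hA1 : μs = π.withDensity (fun x => g (T x)) := density_factors hT π μs hac hcondEq
  have hd : η = π.withDensity (A.indicator (fun x => c * g (T x))) := by
    calc η = c • (π.withDensity fun x => g (T x)).restrict A := by rw [hη, hA1]
    _ = c • (π.restrict A).withDensity (fun x => g (T x)) := by rw [restrict_withDensity hAmeas]
    _ = (π.restrict A).withDensity (fun x => c * g (T x)) := by
        rw [← withDensity_smul c (show Measurable fun x => g (T x) from hg.comp hT)]; rfl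
    _ = π.withDensity (A.indicator (fun x => c * g (T x))) :=
        (withDensity_indicator hAmeas _).symm
  have hdmeas : Measurable (A.indicator fun x => c * g (T x)) :=
    (measurable_const.mul (hg.comp hT)).indicator hAmeas
  have hηac : η ≪ π := by
    rw [hd]; exact withDensity_absolutelyContinuous _ _
  have hrnη : η.rnDeriv π =ᵐ[π] A.indicator (fun x => c * g (T x)) := by
    rw [hd]; exact Measure.rnDeriv_withDensity π hdmeas
  have hrnημ : ∀ᵐ x ∂η, η.rnDeriv π x = A.indicator (fun x => c * g (T x)) x :=
    hrnη.filter_mono hηac.ae_le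
  have hmemA : ∀ᵐ x ∂η, x ∈ A := by
    rw [ae_iff]
    have hAc : {x | ¬ x ∈ A} = Aᶜ := rfl
    rw [hAc, hη, Measure.smul_apply, Measure.restrict_apply hAmeas.compl]
    simp
  have hgfinπ : ∀ᵐ x ∂π, g (T x) ≠ ⊤ := by
    have h1 : ∀ᵐ t ∂(π.map T), g t ≠ ⊤ :=
      (Measure.rnDeriv_lt_top (μs.map T) (π.map T)).mono fun _ hx => hx.ne
    exact (ae_map_iff hT.aemeasurable (hg (measurableSet_singleton ⊤)).compl).mp h1
  have hgfin : ∀ᵐ x ∂η, g (T x) ≠ ⊤ := hgfinπ.filter_mono hηac.ae_le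
  have hημs : η ≪ μs := by
    rw [hη]
    intro s hs0
    simp only [Measure.smul_apply, smul_eq_mul]
    exact mul_eq_zero.mpr (Or.inr (le_antisymm
      ((Measure.restrict_apply_le _ _).trans hs0.le) zero_le))
  have hg0μs : ∀ᵐ x ∂μs, g (T x) ≠ 0 := by
    rw [ae_iff]
    simp only [not_not]
    have hmeas0 : MeasurableSet {x | g (T x) = 0} := (hg.comp hT) (measurableSet_singleton 0)
    rw [hA1, withDensity_apply _ hmeas0,
      setLIntegral_congr_fun hmeas0 (fun x hx => hx)]
    simp
  have hg0 : ∀ᵐ x ∂η, g (T x) ≠ 0 := hg0μs.filter_mono hημs.ae_le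
  have hctoReal : c.toReal = Real.exp (h - hstar) := ENNReal.toReal_ofReal (Real.exp_pos _).le
  have key : (fun x => Real.log ((η.rnDeriv π x).toReal)) =ᵐ[η]
      (fun x => (h - hstar) + Real.log ((g (T x)).toReal)) := by
    filter_upwards [hrnημ, hmemA, hg0, hgfin] with x hx hxA hx0 hxfin
    rw [hx, Set.indicator_of_mem hxA, ENNReal.toReal_mul, hctoReal,
      Real.log_mul (Real.exp_pos _).ne' (ENNReal.toReal_ne_zero.mpr ⟨hx0, hxfin⟩), Real.log_exp]
  have hrnμs : (fun x => Real.log ((μs.rnDeriv π x).toReal)) =ᵐ[μs]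
      (fun x => Real.log ((g (T x)).toReal)) := by
    have hπae : μs.rnDeriv π =ᵐ[π] fun x => g (T x) := by
      have h2 := Measure.rnDeriv_withDensity π (show Measurable fun x => g (T x) from hg.comp hT)
      rw [← hA1] at h2; exact h2
    exact (hπae.filter_mono hac.ae_le).mono fun x hx => by simp only [hx]
  have hintμs : Integrable (fun x => Real.log ((g (T x)).toReal)) μs := hfin.congr hrnμs
  have hintη : Integrable (fun x => Real.log ((g (T x)).toReal)) η := by
    rw [hη]
    exact (hintμs.restrict).smul_measure ENNReal.ofReal_ne_top
  have hstep : Ent η π = (h - hstar) + ∫ x, Real.log ((g (T x)).toReal) ∂η := by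
    rw [Ent, integral_congr_ae key, integral_add (integrable_const _) hintη, integral_const]
    simp
  have hmeasψ : Measurable (fun t => Real.log ((g t).toReal)) :=
    Real.measurable_log.comp (ENNReal.measurable_toReal.comp hg)
  have h2 : ∫ x, Real.log ((g (T x)).toReal) ∂η = ∫ t, Real.log ((g t).toReal) ∂(η.map T) :=
    (integral_map hT.aemeasurable hmeasψ.aestronglyMeasurable).symm
  have h3 : ∫ t, Real.log ((g t).toReal) ∂(μs.map T) = ∫ x, Real.log ((g (T x)).toReal) ∂μs :=
    integral_map hT.aemeasurable hmeasψ.aestronglyMeasurable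
  rw [Ent] at hEnt
  have h4 : ∫ x, Real.log ((g (T x)).toReal) ∂μs = hstar := by
    rw [← integral_congr_ae hrnμs]; exact hEnt
  rw [hstep, h2, hmapEq, h3, h4]
  ring
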